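/- arXiv:2004.10086 — 4 statements merged into one kernel-verified Lean document; each statement's English description precedes it below -/
import Mathlib

section
/- For every integer n ≥ 2 and every complex number z not an n-th root of unity and z ≠ 0, (z^n + 1)/(z^n - 1) - (1/n)·(z + 1)/(z - 1) = (1/n)·((z² - 1)/(2z)) · Σ_{k=1}^{n-1} 1/((z² + 1)/(2z) - cos(2kπ/n)). -/
open Real Complex Finset

theorem stmt2 (n : ℕ) (hn : 2 ≤ n) (z : ℂ) (hz : z ^ n ≠ 1) (hz0 : z ≠ 0) :
    (z ^ n + 1) / (z ^ n - 1) - (1 / n) * ((z + 1) / (z - 1)) =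
      (1 / n) * ((z ^ 2 - 1) / (2 * z)) * ∑ k ∈ Finset.Ico 1 n,
        1 / ((z ^ 2 + 1) / (2 * z) - (Real.cos (2 * k * Real.pi / n) : ℂ)) := by
  have hn0 : (n : ℂ) ≠ 0 := Nat.cast_ne_zero.2 (by omega)
  have hnpos : 0 < n := by omega
  set ζ : ℂ := Complex.exp (2 * Real.pi * Complex.I / n) with hζdef
  have hζ0 : ζ ≠ 0 := Complex.exp_ne_zero _
  have hζn : ζ ^ n = 1 := by
    rw [hζdef, ← Complex.exp_nat_mul, mul_div_cancel₀ _ hn0]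
    exact Complex.exp_two_pi_mul_I
  have hπ : (Real.pi : ℂ) ≠ 0 := Complex.ofReal_ne_zero.2 Real.pi_ne_zero
  have h2πI : (2 * (Real.pi : ℂ) * Complex.I) ≠ 0 := by
    simp [hπ, Complex.I_ne_zero]
  have hζm : ∀ m : ℕ, 0 < m → m < n → ζ ^ m ≠ 1 := by
    intro m hm1 hm2 h
    rw [hζdef, ← Complex.exp_nat_mul, Complex.exp_eq_one_iff] at h
    obtain ⟨j, hj⟩ := h
    field_simp at hj
    have hcast : (m : ℂ) = (j : ℂ) * n := by
      apply mul_right_cancel₀ h2πI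
      linear_combination (2 * (Real.pi : ℂ) * Complex.I) * hj
    have : (m : ℤ) = j * n := by exact_mod_cast hcast
    have hdvd : (n : ℤ) ∣ (m : ℤ) := ⟨j, by linarith⟩
    have hnm : n ∣ m := Int.ofNat_dvd.mp hdvd
    have := Nat.le_of_dvd hm1 hnm
    omega
  have hzw : ∀ k : ℕ, z - ζ ^ k ≠ 0 := by
    intro k h
    apply hz
    rw [sub_eq_zero] at h
    rw [h, ← pow_mul, mul_comm, pow_mul, hζn, one_pow]
  have hz1 : z - 1 ≠ 0 := by have := hzw 0; simpa using this
  have hzn1 : z ^ n - 1 ≠ 0 := sub_ne_zero.2 hz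
  have hpowone : ∀ m : ℕ, (ζ ^ m) ^ n = 1 := fun m => by
    rw [← pow_mul, mul_comm, pow_mul, hζn, one_pow]
  -- key sum
  have key : ∑ k ∈ range n, (z ^ n - 1) * (z - ζ ^ k)⁻¹ = n * z ^ (n - 1) := by
    have step : ∀ k ∈ range n, (z ^ n - 1) * (z - ζ ^ k)⁻¹
        = ∑ j ∈ range n, z ^ j * (ζ ^ (n - 1 - j)) ^ k := by
      intro k _
      rw [show z ^ n - 1 = z ^ n - (ζ ^ k) ^ n by rw [hpowone],
        ← geom_sum₂_mul z (ζ ^ k) n, mul_assoc,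
        mul_inv_cancel₀ (hzw k), mul_one]
      refine Finset.sum_congr rfl fun j _ => ?_
      rw [← pow_mul, ← pow_mul, Nat.mul_comm]
    rw [Finset.sum_congr rfl step, Finset.sum_comm]
    have inner : ∀ j ∈ range n, ∑ k ∈ range n, z ^ j * (ζ ^ (n - 1 - j)) ^ k
        = if j = n - 1 then n * z ^ (n - 1) else 0 := by
      intro j hj
      rw [Finset.mem_range] at hj
      rw [← Finset.mul_sum]
      by_cases hje : j = n - 1
      · subst hje
        simp [mul_comm]
      · have hne : ζ ^ (n - 1 - j) ≠ 1 := hζm _ (by omega) (by omega)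
        rw [geom_sum_eq hne, hpowone]
        simp [hje]
    rw [Finset.sum_congr rfl inner, Finset.sum_ite_eq' (range n) (n-1)]
    simp [Finset.mem_range, Nat.sub_lt hnpos]
  have hzpow : z * z ^ (n - 1) = z ^ n := by
    rw [← pow_succ']; congr 1; omega
  -- sum over all k of z/(z-ζ^k)
  have S1 : ∑ k ∈ range n, z * (z - ζ ^ k)⁻¹ = n * z ^ n / (z ^ n - 1) := by
    have h : ∀ k ∈ range n, z * (z - ζ ^ k)⁻¹
        = z * (z ^ n - 1)⁻¹ * ((z ^ n - 1) * (z - ζ ^ k)⁻¹) := by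
      intro k _; field_simp
    rw [Finset.sum_congr rfl h, ← Finset.mul_sum, key]
    rw [show z * (z ^ n - 1)⁻¹ * (n * z ^ (n - 1))
        = (z * z ^ (n - 1)) * n * (z ^ n - 1)⁻¹ by ring, hzpow, div_eq_mul_inv]
    ring
  -- sum over 1..n-1
  have T : ∑ k ∈ Finset.Ico 1 n, z * (z - ζ ^ k)⁻¹
      = n * z ^ n / (z ^ n - 1) - z * (z - 1)⁻¹ := by
    rw [← S1, Finset.range_eq_Ico, Finset.sum_eq_sum_Ico_succ_bot hnpos]
    simp
  -- reflected sum
  have Trefl : ∑ k ∈ Finset.Ico 1 n, z * (z - (ζ ^ k)⁻¹)⁻¹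
      = n * z ^ n / (z ^ n - 1) - z * (z - 1)⁻¹ := by
    rw [← T]
    apply Finset.sum_nbij' (fun k => n - k) (fun k => n - k)
    · intro a ha; rw [Finset.mem_Ico] at *; omega
    · intro a ha; rw [Finset.mem_Ico] at *; omega
    · intro a ha; rw [Finset.mem_Ico] at ha; omega
    · intro a ha; rw [Finset.mem_Ico] at ha; omega
    · intro a ha
      rw [Finset.mem_Ico] at ha
      have h : ζ ^ a * ζ ^ (n - a) = 1 := by
        rw [← pow_add, show a + (n - a) = n by omega, hζn]
      have h1 : (ζ ^ a)⁻¹ = ζ ^ (n - a) := inv_eq_of_mul_eq_one_right h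
      rw [h1]
  -- cos identity
  have hcos : ∀ k : ℕ, (Real.cos (2 * k * Real.pi / n) : ℂ)
      = (ζ ^ k + (ζ ^ k)⁻¹) / 2 := by
    intro k
    have h1 : ζ ^ k = Complex.exp ((2 * k * Real.pi / n : ℝ) * Complex.I) := by
      rw [hζdef, ← Complex.exp_nat_mul]
      congr 1
      push_cast
      ring
    have h2 : (ζ ^ k)⁻¹ = Complex.exp (-((2 * k * Real.pi / n : ℝ) * Complex.I)) := by
      rw [h1, ← Complex.exp_neg]
    rw [h1, ← Complex.exp_neg, Complex.ofReal_cos, Complex.cos]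
    ring_nf
  -- per-term identity
  have term : ∀ k ∈ Finset.Ico 1 n,
      (z ^ 2 - 1) / (2 * z) * (1 / ((z ^ 2 + 1) / (2 * z) - (Real.cos (2 * k * Real.pi / n) : ℂ)))
      = z * (z - ζ ^ k)⁻¹ + z * (z - (ζ ^ k)⁻¹)⁻¹ - 1 := by
    intro k hk
    rw [Finset.mem_Ico] at hk
    set w := ζ ^ k with hw
    have hw0 : w ≠ 0 := pow_ne_zero _ hζ0
    have hzw1 : z - w ≠ 0 := hzw k
    have hwinv : w⁻¹ = ζ ^ (n - k) := by
      apply inv_eq_of_mul_eq_one_right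
      rw [hw, ← pow_add, show k + (n - k) = n by omega, hζn]
    have hzw2 : z - w⁻¹ ≠ 0 := by rw [hwinv]; exact hzw _
    rw [hcos k]
    have hden : (z ^ 2 + 1) / (2 * z) - (w + w⁻¹) / 2
        = (z - w) * (z - w⁻¹) / (2 * z) := by
      field_simp
      ring
    have h3 : z * w - 1 ≠ 0 := by
      have he : (z - w⁻¹) * w = z * w - 1 := by field_simp
      rw [← he]
      exact mul_ne_zero hzw2 hw0
    rw [hden]
    field_simp
    ring
  -- cardinality
  have hcard : ∑ _k ∈ Finset.Ico 1 n, (1 : ℂ) = (n : ℂ) - 1 := by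
    rw [Finset.sum_const, Nat.card_Ico, nsmul_eq_mul, mul_one]
    push_cast [Nat.cast_sub (by omega : 1 ≤ n)]
    ring
  -- assemble
  have hsum : (z ^ 2 - 1) / (2 * z) * ∑ k ∈ Finset.Ico 1 n,
      1 / ((z ^ 2 + 1) / (2 * z) - (Real.cos (2 * k * Real.pi / n) : ℂ))
      = 2 * (n * z ^ n / (z ^ n - 1)) - 2 * (z * (z - 1)⁻¹) - ((n : ℂ) - 1) := by
    rw [Finset.mul_sum, Finset.sum_congr rfl term]
    rw [Finset.sum_sub_distrib, Finset.sum_add_distrib, T, Trefl, hcard]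
    ring
  rw [mul_assoc, hsum]
  field_simp
  ring
end

section
/- For every real x > 0, ∫_0^∞ (1/(e^t-1) - 1/t + 1/2)·e^{-tx}·dt/t = log Γ(x) - (x - 1/2)·log x + x - (1/2)·log(2π). -/
open Real MeasureTheory Set Filter Topology

namespace BinetAux

/-- If `F 0 = 0` and `F' ≥ 0` on `[0,∞)` then `F ≥ 0` there. -/
lemma nonneg_of_deriv {F F' : ℝ → ℝ} (hF : ∀ t, HasDerivAt F (F' t) t)
    (h0 : F 0 = 0) (hd : ∀ t, 0 ≤ t → 0 ≤ F' t) {t : ℝ} (ht : 0 ≤ t) : 0 ≤ F t := by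
  have hmono : MonotoneOn F (Ici 0) := by
    apply monotoneOn_of_deriv_nonneg (convex_Ici 0)
      (fun s _ => (hF s).continuousAt.continuousWithinAt)
      (fun s hs => (hF s).differentiableAt.differentiableWithinAt)
    intro s hs
    rw [(hF s).deriv]
    exact hd s (le_of_lt (by simpa using hs))
  simpa [h0] using hmono (le_refl (0:ℝ) : (0:ℝ) ∈ Ici (0:ℝ)) (mem_Ici.2 ht) ht

lemma N_nonneg {t : ℝ} (ht : 0 ≤ t) : 0 ≤ (t - 2) * exp t + t + 2 := by
  have hd1 : ∀ s : ℝ, HasDerivAt (fun s => (s - 1) * exp s + 1) (s * exp s) s := by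
    intro s
    have h := ((hasDerivAt_id s).sub_const 1).mul (Real.hasDerivAt_exp s)
    convert (config := { preTransparency := .default }) h.add_const 1 using 1
    simp only [id_eq]; ring
  have h1 : ∀ s : ℝ, 0 ≤ s → 0 ≤ (s - 1) * exp s + 1 := by
    intro s hs
    refine nonneg_of_deriv hd1 (by simp) (fun u hu => ?_) hs
    positivity
  have hd2 : ∀ s : ℝ, HasDerivAt (fun s => (s - 2) * exp s + s + 2) ((s - 1) * exp s + 1) s := by
    intro s
    have h := (((hasDerivAt_id s).sub_const 2).mul (Real.hasDerivAt_exp s)).add (hasDerivAt_id s)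
    convert (config := { preTransparency := .default }) h.add_const 2 using 1
    simp only [id_eq]; ring
  refine nonneg_of_deriv hd2 (by simp) h1 ht

lemma N_le {t : ℝ} (ht : 0 ≤ t) : (t - 2) * exp t + t + 2 ≤ t ^ 3 * exp t / 6 := by
  have hd1 : ∀ s : ℝ, HasDerivAt (fun s => (s ^ 3 / 6 + s ^ 2 / 2 - s + 1) * exp s - 1)
      ((s ^ 3 / 6 + s ^ 2) * exp s) s := by
    intro s
    have hp : HasDerivAt (fun s : ℝ => s ^ 3 / 6 + s ^ 2 / 2 - s + 1)
        (3 * s ^ 2 / 6 + 2 * s / 2 - 1) s := by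
      have := (((hasDerivAt_pow 3 s).div_const 6).add ((hasDerivAt_pow 2 s).div_const 2)).sub
        (hasDerivAt_id s)
      convert (config := { preTransparency := .default }) this.add_const 1 using 1
      simp
    have h := hp.mul (Real.hasDerivAt_exp s)
    convert (config := { preTransparency := .default }) h.sub_const 1 using 1
    ring
  have h1 : ∀ s : ℝ, 0 ≤ s → 0 ≤ (s ^ 3 / 6 + s ^ 2 / 2 - s + 1) * exp s - 1 := by
    intro s hs
    refine nonneg_of_deriv hd1 (by simp) (fun u hu => by positivity) hs
  have hd2 : ∀ s : ℝ, HasDerivAt (fun s => s ^ 3 * exp s / 6 - ((s - 2) * exp s + s + 2))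
      ((s ^ 3 / 6 + s ^ 2 / 2 - s + 1) * exp s - 1) s := by
    intro s
    have hp : HasDerivAt (fun s : ℝ => s ^ 3 * exp s / 6)
        ((3 * s ^ 2 * exp s + s ^ 3 * exp s) / 6) s := by
      have := ((hasDerivAt_pow 3 s).mul (Real.hasDerivAt_exp s)).div_const 6
      convert (config := { preTransparency := .default }) this using 1
      all_goals ring
    have hq : HasDerivAt (fun s : ℝ => (s - 2) * exp s + s + 2) ((s - 1) * exp s + 1) s := by
      have h := (((hasDerivAt_id s).sub_const 2).mul (Real.hasDerivAt_exp s)).add (hasDerivAt_id s)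
      convert (config := { preTransparency := .default }) h.add_const 2 using 1
      simp only [id_eq]; ring
    convert (config := { preTransparency := .default }) hp.sub hq using 1
    ring_nf
  have := nonneg_of_deriv hd2 (by simp) h1 ht
  linarith

lemma exp_sub_one_pos {t : ℝ} (ht : 0 < t) : 0 < exp t - 1 := by
  have := Real.add_one_le_exp t
  linarith

lemma f_eq {t : ℝ} (ht : 0 < t) :
    1 / (exp t - 1) - 1 / t + 1 / 2 = ((t - 2) * exp t + t + 2) / (2 * t * (exp t - 1)) := by
  have h1 := exp_sub_one_pos ht
  field_simp
  ring

lemma f_nonneg {t : ℝ} (ht : 0 < t) : 0 ≤ 1 / (exp t - 1) - 1 / t + 1 / 2 := by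
  rw [f_eq ht]
  have h1 := exp_sub_one_pos ht
  exact div_nonneg (N_nonneg ht.le) (by positivity)

lemma g_le_two {t : ℝ} (ht : 0 < t) : (1 / (exp t - 1) - 1 / t + 1 / 2) / t ≤ 2 := by
  have h1 := exp_sub_one_pos ht
  have het : t + 1 ≤ exp t := Real.add_one_le_exp t
  rcases le_or_gt t 1 with h | h
  · rw [f_eq ht, div_div]
    rw [div_le_iff₀ (by positivity)]
    have hexp3 : exp t ≤ 3 := by
      have := Real.exp_one_lt_d9
      calc exp t ≤ exp 1 := Real.exp_le_exp.2 h
        _ ≤ 3 := by linarith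
    have hNle := N_le ht.le
    have h2 : t ^ 3 * exp t / 6 ≤ t ^ 3 / 2 := by
      rw [div_le_div_iff₀ (by norm_num) (by norm_num)]
      nlinarith [pow_pos ht 3]
    have h3 : t ≤ exp t - 1 := by linarith
    nlinarith [pow_pos ht 3, sq_nonneg t]
  · have hf : 1 / (exp t - 1) - 1 / t + 1 / 2 ≤ 2 := by
      have h2 : 1 / (exp t - 1) ≤ 1 / t := by
        apply one_div_le_one_div_of_le ht
        linarith
      have h3 : 1 / t ≤ 1 := by
        rw [div_le_one ht]; linarith
      have h4 : 0 < 1 / t := by positivity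
      linarith
    calc (1 / (exp t - 1) - 1 / t + 1 / 2) / t ≤ 1 / (exp t - 1) - 1 / t + 1 / 2 :=
          div_le_self (f_nonneg ht) h.le
      _ ≤ 2 := hf

lemma contOn (x : ℝ) :
    ContinuousOn (fun t : ℝ => (1 / (exp t - 1) - 1 / t + 1 / 2) * exp (-(t * x)) / t)
      (Ioi (0:ℝ)) := by
  apply ContinuousOn.div _ continuousOn_id (fun t ht => ne_of_gt ht)
  apply ContinuousOn.mul
  · apply ContinuousOn.add
    · apply ContinuousOn.sub
      · exact continuousOn_const.div (Real.continuous_exp.continuousOn.sub continuousOn_const)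
          (fun t ht => ne_of_gt (exp_sub_one_pos ht))
      · exact continuousOn_const.div continuousOn_id (fun t ht => ne_of_gt ht)
    · exact continuousOn_const
  · exact (Real.continuous_exp.comp (continuous_id.mul continuous_const).neg).continuousOn

lemma norm_integrand_le {x t : ℝ} (hx : 0 < x) (ht : 0 < t) :
    ‖(1 / (exp t - 1) - 1 / t + 1 / 2) * exp (-(t * x)) / t‖ ≤ 2 * exp (-x * t) := by
  have h1 : (1 / (exp t - 1) - 1 / t + 1 / 2) * exp (-(t * x)) / t
      = ((1 / (exp t - 1) - 1 / t + 1 / 2) / t) * exp (-(t * x)) := by ring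
  rw [h1, Real.norm_eq_abs, abs_mul, abs_of_nonneg (div_nonneg (f_nonneg ht) ht.le),
    abs_of_nonneg (Real.exp_nonneg _)]
  have h2 : -(t * x) = -x * t := by ring
  rw [h2]
  exact mul_le_mul_of_nonneg_right (g_le_two ht) (Real.exp_nonneg _)

lemma integrableB {x : ℝ} (hx : 0 < x) :
    IntegrableOn (fun t : ℝ => (1 / (exp t - 1) - 1 / t + 1 / 2) * exp (-(t * x)) / t)
      (Ioi (0:ℝ)) := by
  apply Integrable.mono' ((exp_neg_integrableOn_Ioi 0 hx).const_mul 2)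
    ((contOn x).aestronglyMeasurable measurableSet_Ioi)
  rw [ae_restrict_iff' measurableSet_Ioi]
  exact Eventually.of_forall (fun t ht => norm_integrand_le hx ht)

lemma int_exp {u : ℝ} (hu : 0 < u) : ∫ t in Ioi (0:ℝ), exp (-(u * t)) = 1 / u := by
  have hderiv : ∀ t ∈ Ioi (0:ℝ), HasDerivAt (fun t => -exp (-(u * t)) / u) (exp (-(u * t))) t := by
    intro t _
    have h := (((hasDerivAt_id t).const_mul u).neg.exp.neg).div_const u
    convert (config := { preTransparency := .default }) h using 1
    field_simp
    rfl
  have hcont : ContinuousWithinAt (fun t => -exp (-(u * t)) / u) (Ici (0:ℝ)) 0 :=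
    (((Real.continuous_exp.comp (continuous_const.mul continuous_id).neg).neg).div_const
      u).continuousWithinAt
  have hint : IntegrableOn (fun t : ℝ => exp (-(u * t))) (Ioi (0:ℝ)) := by
    simpa [neg_mul] using exp_neg_integrableOn_Ioi 0 hu
  have htend : Tendsto (fun t => -exp (-(u * t)) / u) atTop (𝓝 0) := by
    have h1 : Tendsto (fun t : ℝ => u * t) atTop atTop :=
      tendsto_id.const_mul_atTop hu
    have h2 : Tendsto (fun t : ℝ => exp (-(u * t))) atTop (𝓝 0) :=
      Real.tendsto_exp_neg_atTop_nhds_zero.comp h1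
    simpa using (h2.neg).div_const u
  have := integral_Ioi_of_hasDerivAt_of_tendsto hcont hderiv hint htend
  rw [this]
  field_simp
  simp

lemma B_abs_le {x : ℝ} (hx : 0 < x) :
    |∫ t in Ioi (0:ℝ), (1 / (exp t - 1) - 1 / t + 1 / 2) * exp (-(t * x)) / t| ≤ 2 / x := by
  have h1 : |∫ t in Ioi (0:ℝ), (1 / (exp t - 1) - 1 / t + 1 / 2) * exp (-(t * x)) / t|
      ≤ ∫ t in Ioi (0:ℝ), 2 * exp (-x * t) := by
    rw [← Real.norm_eq_abs]
    apply norm_integral_le_of_norm_le ((exp_neg_integrableOn_Ioi 0 hx).const_mul 2)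
    rw [ae_restrict_iff' measurableSet_Ioi]
    exact Eventually.of_forall (fun t ht => norm_integrand_le hx ht)
  have h2 : ∫ t in Ioi (0:ℝ), 2 * exp (-x * t) = 2 / x := by
    rw [MeasureTheory.integral_const_mul]
    have : ∀ t : ℝ, exp (-x * t) = exp (-(x * t)) := by intro t; ring_nf
    simp_rw [this, int_exp hx]
    ring
  linarith

lemma pointwise {x : ℝ} {t : ℝ} (ht : 0 < t) :
    (1 / (exp t - 1) - 1 / t + 1 / 2) * exp (-(t * x)) / t
      - (1 / (exp t - 1) - 1 / t + 1 / 2) * exp (-(t * (x + 1))) / t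
    = ∫ u in Ioc x (x + 1), (x + 1 / 2 - u) * exp (-(u * t)) := by
  have key : ∀ u : ℝ, HasDerivAt
      (fun u => (1 / t ^ 2 - (x + 1 / 2) / t + u / t) * exp (-(u * t)))
      ((x + 1 / 2 - u) * exp (-(u * t))) u := by
    intro u
    have h1 : HasDerivAt (fun u : ℝ => 1 / t ^ 2 - (x + 1 / 2) / t + u / t) (1 / t) u := by
      have h := ((hasDerivAt_id u).div_const t).const_add (1 / t ^ 2 - (x + 1 / 2) / t)
      convert (config := { preTransparency := .default }) h using 1
    have h2 : HasDerivAt (fun u : ℝ => exp (-(u * t))) (-t * exp (-(u * t))) u := by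
      have h := (((hasDerivAt_id u).mul_const t).neg).exp
      convert (config := { preTransparency := .default }) h using 1
      simp [id]
      try ring
    have h := h1.mul h2
    convert (config := { preTransparency := .default }) h using 1
    field_simp
    ring
  rw [← intervalIntegral.integral_of_le (by linarith : x ≤ x + 1)]
  rw [intervalIntegral.integral_eq_sub_of_hasDerivAt (fun u _ => key u)
    (Continuous.intervalIntegrable (by continuity) _ _)]
  have e1 : exp (-(t * (x + 1))) = exp (-(t * x)) * exp (-t) := by
    rw [← Real.exp_add]; ring_nf
  have e2 : exp (-((x + 1) * t)) = exp (-(t * x)) * exp (-t) := by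
    rw [← Real.exp_add]; ring_nf
  have e3 : exp (-(x * t)) = exp (-(t * x)) := by ring_nf
  have e4 : exp (-t) = (exp t)⁻¹ := Real.exp_neg t
  have h1 : exp t - 1 ≠ 0 := ne_of_gt (exp_sub_one_pos ht)
  have h2 : exp t ≠ 0 := (Real.exp_pos t).ne'
  rw [e1, e2, e3, e4]
  field_simp
  ring

lemma prod_int {x : ℝ} (hx : 0 < x) :
    Integrable (fun p : ℝ × ℝ => (x + 1 / 2 - p.2) * exp (-(p.2 * p.1)))
      ((volume.restrict (Ioi (0:ℝ))).prod (volume.restrict (Ioc x (x + 1)))) := by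
  have hK : Continuous fun p : ℝ × ℝ => (x + 1 / 2 - p.2) * exp (-(p.2 * p.1)) := by
    continuity
  rw [integrable_prod_iff hK.aestronglyMeasurable]
  constructor
  · exact Eventually.of_forall fun t =>
      (Continuous.integrableOn_Ioc (by continuity))
  · apply Integrable.mono' ((exp_neg_integrableOn_Ioi 0 hx).const_mul (1 / 2))
    · exact (hK.norm.aestronglyMeasurable).integral_prod_right'
    · rw [ae_restrict_iff' measurableSet_Ioi]
      apply Eventually.of_forall
      intro t ht
      have hb : ∀ u ∈ Ioc x (x + 1),
          ‖(x + 1 / 2 - u) * exp (-(u * t))‖ ≤ (1 / 2) * exp (-x * t) := by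
        intro u hu
        rw [Real.norm_eq_abs, abs_mul, abs_of_nonneg (Real.exp_nonneg _)]
        apply mul_le_mul _ _ (Real.exp_nonneg _) (by norm_num)
        · rw [abs_le]; constructor <;> [skip; skip] <;>
            · rcases hu with ⟨hu1, hu2⟩; linarith
        · apply Real.exp_le_exp.2
          have := le_of_lt (mem_Ioi.1 ht)
          nlinarith [hu.1.le]
      have hnn : 0 ≤ ∫ u in Ioc x (x + 1), ‖(x + 1 / 2 - u) * exp (-(u * t))‖ :=
        integral_nonneg fun u => norm_nonneg _
      rw [Real.norm_eq_abs, abs_of_nonneg hnn]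
      calc ∫ u in Ioc x (x + 1), ‖(x + 1 / 2 - u) * exp (-(u * t))‖
          ≤ ∫ _u in Ioc x (x + 1), (1 / 2) * exp (-x * t) := by
            apply setIntegral_mono_on
              (Continuous.integrableOn_Ioc (by continuity)).norm
              (integrableOn_const measure_Ioc_lt_top.ne) measurableSet_Ioc hb
        _ = (1 / 2) * exp (-x * t) := by
            rw [setIntegral_const]
            rw [Real.volume_real_Ioc]
            norm_num

lemma B_rec {x : ℝ} (hx : 0 < x) :
    (∫ t in Ioi (0:ℝ), (1 / (exp t - 1) - 1 / t + 1 / 2) * exp (-(t * x)) / t)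
      - (∫ t in Ioi (0:ℝ), (1 / (exp t - 1) - 1 / t + 1 / 2) * exp (-(t * (x + 1))) / t)
    = (x + 1 / 2) * (log (x + 1) - log x) - 1 := by
  have hx1 : (0:ℝ) < x + 1 := by linarith
  rw [← integral_sub (integrableB hx) (integrableB hx1)]
  rw [setIntegral_congr_fun measurableSet_Ioi (fun t ht => pointwise (x := x) ht)]
  have hswap := MeasureTheory.integral_integral_swap
    (f := fun t u => (x + 1 / 2 - u) * exp (-(u * t))) (prod_int hx)
  rw [hswap]
  have hinner : ∀ u ∈ Ioc x (x + 1),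
      (∫ t in Ioi (0:ℝ), (x + 1 / 2 - u) * exp (-(u * t))) = (x + 1 / 2) * (1 / u) - 1 := by
    intro u hu
    have hu0 : 0 < u := lt_trans hx hu.1
    rw [MeasureTheory.integral_const_mul, int_exp hu0]
    field_simp
  rw [setIntegral_congr_fun measurableSet_Ioc hinner]
  rw [← intervalIntegral.integral_of_le (by linarith : x ≤ x + 1)]
  have h1 : IntervalIntegrable (fun u : ℝ => (x + 1 / 2) * (1 / u)) volume x (x + 1) := by
    apply ContinuousOn.intervalIntegrable
    apply continuousOn_const.mul
    apply continuousOn_const.div continuousOn_id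
    intro u hu
    rw [uIcc_of_le (by linarith : x ≤ x + 1)] at hu
    exact ne_of_gt (lt_of_lt_of_le hx hu.1)
  rw [intervalIntegral.integral_sub h1 intervalIntegrable_const]
  rw [intervalIntegral.integral_const_mul, integral_one_div (by
    rw [uIcc_of_le (by linarith : x ≤ x + 1)]
    intro h
    exact absurd h.1 (by linarith))]
  rw [Real.log_div (by linarith) (by linarith)]
  simp

noncomputable def Gf (x : ℝ) : ℝ :=
  Real.log (Real.Gamma x) - (x - 1 / 2) * Real.log x + x - (1 / 2) * Real.log (2 * Real.pi)

lemma G_rec {x : ℝ} (hx : 0 < x) :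
    Gf x - Gf (x + 1) = (x + 1 / 2) * (log (x + 1) - log x) - 1 := by
  unfold Gf
  rw [Real.Gamma_add_one hx.ne', Real.log_mul hx.ne' (Real.Gamma_pos_of_pos hx).ne']
  ring

lemma log_gamma_feq : ∀ {y : ℝ}, 0 < y →
    (Real.log ∘ Real.Gamma) (y + 1) = (Real.log ∘ Real.Gamma) y + log y := by
  intro y hy
  rw [Function.comp_apply, Real.Gamma_add_one hy.ne',
    Real.log_mul hy.ne' (Real.Gamma_pos_of_pos hy).ne', add_comm, Function.comp_apply]

lemma G_tendsto {x : ℝ} (hx : 0 < x) :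
    Tendsto (fun n : ℕ => Gf (x + n + 1)) atTop (𝓝 0) := by
  have hTtend : Tendsto (fun n : ℕ =>
    (Real.log (Stirling.stirlingSeq n) - Real.log (Real.sqrt π))
      + (Real.log (Real.Gamma x) - Real.BohrMollerup.logGammaSeq x n)
      + (-((n : ℝ) * Real.log (1 + (x + 1) / n)) - (x + 1 / 2) * Real.log (1 + (x + 1) / n)
          + (x + 1))) atTop (𝓝 0) := by
    have h1 : Tendsto (fun n : ℕ => Real.log (Stirling.stirlingSeq n) - Real.log (Real.sqrt π))
        atTop (𝓝 0) := by
      have := (Stirling.tendsto_stirlingSeq_sqrt_pi.log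
        (ne_of_gt (Real.sqrt_pos.2 Real.pi_pos))).sub
        (tendsto_const_nhds (x := Real.log (Real.sqrt π)))
      simpa using this
    have h2 : Tendsto (fun n : ℕ => Real.log (Real.Gamma x)
        - Real.BohrMollerup.logGammaSeq x n) atTop (𝓝 0) := by
      have := (tendsto_const_nhds (x := Real.log (Real.Gamma x))).sub
        (Real.BohrMollerup.tendsto_log_gamma hx)
      simpa using this
    have h4 : Tendsto (fun n : ℕ => Real.log (1 + (x + 1) / n)) atTop (𝓝 0) := by
      have hb : Tendsto (fun n : ℕ => 1 + (x + 1) / n) atTop (𝓝 1) := by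
        have := (tendsto_const_nhds (x := (1:ℝ))).add
          (tendsto_const_div_atTop_nhds_zero_nat (x + 1))
        simpa using this
      have := hb.log one_ne_zero
      simpa using this
    have h3 : Tendsto (fun n : ℕ => (n : ℝ) * Real.log (1 + (x + 1) / n)) atTop (𝓝 (x + 1)) := by
      have hpow : Tendsto (fun n : ℕ => ((1 + (x + 1) / n) ^ n : ℝ)) atTop (𝓝 (exp (x + 1))) :=
        Real.tendsto_one_add_div_pow_exp (x + 1)
      have hlog := hpow.log (Real.exp_ne_zero _)
      rw [Real.log_exp] at hlog
      apply hlog.congr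
      intro n
      rw [Real.log_pow]
    have h5 : Tendsto (fun n : ℕ => -((n : ℝ) * Real.log (1 + (x + 1) / n))
        - (x + 1 / 2) * Real.log (1 + (x + 1) / n) + (x + 1)) atTop (𝓝 0) := by
      have := ((h3.neg).sub (h4.const_mul (x + 1 / 2))).add
        (tendsto_const_nhds (x := x + 1))
      convert this using 2
      ring
    have := (h1.add h2).add h5
    simpa using this
  apply hTtend.congr'
  filter_upwards [eventually_ge_atTop 1] with n hn
  have hn0 : (0:ℝ) < n := by exact_mod_cast hn
  have hxn : (0:ℝ) < x + n + 1 := by linarith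
  -- (a) Gamma addition
  have ha : Real.log (Real.Gamma (x + n + 1))
      = Real.log (Real.Gamma x) + ∑ m ∈ Finset.range (n + 1), Real.log (x + m) := by
    have := Real.BohrMollerup.f_add_nat_eq (f := Real.log ∘ Real.Gamma)
      (fun {y} hy => log_gamma_feq hy) hx (n + 1)
    simp only [Function.comp_apply] at this
    rw [← this]
    congr 1
    push_cast
    ring
  -- (b) sum in terms of logGammaSeq
  have hb : ∑ m ∈ Finset.range (n + 1), Real.log (x + m)
      = x * Real.log n + Real.log (Nat.factorial n : ℝ) - Real.BohrMollerup.logGammaSeq x n := by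
    rw [Real.BohrMollerup.logGammaSeq]
    ring
  -- (c) Stirling formula for log n!
  have hc : Real.log (Nat.factorial n : ℝ)
      = Real.log (Stirling.stirlingSeq n) + 1 / 2 * Real.log (2 * n)
        + n * Real.log ((n : ℝ) / exp 1) := by
    have := Stirling.log_stirlingSeq_formula n
    linarith
  have hd : Real.log ((n : ℝ) / exp 1) = Real.log n - 1 := by
    rw [Real.log_div hn0.ne' (Real.exp_ne_zero 1), Real.log_exp]
  have he1 : Real.log (2 * (n : ℝ)) = Real.log 2 + Real.log n :=
    Real.log_mul two_ne_zero hn0.ne'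
  have he2 : Real.log (2 * π) = Real.log 2 + Real.log π :=
    Real.log_mul two_ne_zero Real.pi_pos.ne'
  have he3 : Real.log (Real.sqrt π) = Real.log π / 2 := Real.log_sqrt Real.pi_pos.le
  have hf : Real.log (1 + (x + 1) / n) = Real.log (x + n + 1) - Real.log n := by
    have : 1 + (x + 1) / n = (x + n + 1) / n := by field_simp; ring
    rw [this, Real.log_div hxn.ne' hn0.ne']
  rw [Gf, ha, hb, hc, hd, he1, he2, he3, hf]
  ring


noncomputable def Bi (x : ℝ) : ℝ :=
  ∫ t in Ioi (0 : ℝ), (1 / (Real.exp t - 1) - 1 / t + 1 / 2) * Real.exp (-(t * x)) / t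

lemma Bi_abs_le {x : ℝ} (hx : 0 < x) : |Bi x| ≤ 2 / x := by
  unfold Bi; exact B_abs_le hx

lemma Bi_rec {x : ℝ} (hx : 0 < x) :
    Bi x - Bi (x + 1) = (x + 1 / 2) * (log (x + 1) - log x) - 1 := by
  unfold Bi; exact B_rec hx



lemma main {x : ℝ} (hx : 0 < x) : Bi x = Gf x := by
  have step : ∀ y : ℝ, 0 < y → Bi (y + 1) - Gf (y + 1) = Bi y - Gf y := by
    intro y hy
    have h1 := Bi_rec hy
    have h2 := G_rec hy
    linarith
  have key : ∀ n : ℕ, Bi (x + n + 1) - Gf (x + n + 1) = Bi x - Gf x := by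
    intro n
    induction n with
    | zero => simpa using step x hx
    | succ n ih =>
      have hpos : (0:ℝ) < x + n + 1 := by
        have := Nat.cast_nonneg (α := ℝ) n
        linarith
      have := step (x + n + 1) hpos
      have hcast : x + ((n:ℝ) + 1) + 1 = x + n + 1 + 1 := by ring
      rw [← ih, ← this]
      congr 1 <;> · congr 1; push_cast; ring
  have hBtend : Tendsto (fun n : ℕ => Bi (x + n + 1)) atTop (𝓝 0) := by
    refine squeeze_zero_norm (a := fun n : ℕ => 2 / (x + n + 1)) (fun n => ?_) ?_
    · exact Bi_abs_le (by
        have := Nat.cast_nonneg (α := ℝ) n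
        linarith)
    have hdenom : Tendsto (fun n : ℕ => x + n + 1) atTop atTop := by
      have h := Filter.tendsto_atTop_add_const_right atTop (x + 1)
        (tendsto_natCast_atTop_atTop (R := ℝ))
      apply h.congr
      intro n; ring
    exact Tendsto.div_atTop tendsto_const_nhds hdenom
  have hconst : Tendsto (fun _ : ℕ => Bi x - Gf x) atTop (𝓝 0) := by
    apply Tendsto.congr (f₁ := fun n : ℕ => Bi (x + n + 1) - Gf (x + n + 1))
    · exact key
    · simpa using hBtend.sub (G_tendsto hx)
  have := tendsto_nhds_unique hconst tendsto_const_nhds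
  linarith

end BinetAux

theorem stmt8 (x : ℝ) (hx : 0 < x) :
    ∫ t in Set.Ioi (0 : ℝ),
        (1 / (Real.exp t - 1) - 1 / t + 1 / 2) * Real.exp (-(t * x)) / t =
      Real.log (Real.Gamma x) - (x - 1 / 2) * Real.log x + x
        - (1 / 2) * Real.log (2 * Real.pi) := by
  exact BinetAux.main hx
end

section
/- As x → 0⁺, the integral ∫_1^∞ e^{-tx}·dt/t equals -log x - γ + o(1), where γ is the Euler–Mascheroni constant. Equivalently, lim_{x→0⁺} (∫_x^∞ e^{-t} dt/t + log x) = -γ. -/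
open Real MeasureTheory Filter Set Topology

lemma mellinPair :
    MellinConvergent (fun t : ℝ => Real.log t • ((Real.exp (-t) : ℝ) : ℂ)) 1 ∧
      HasDerivAt (mellin fun x : ℝ => ((Real.exp (-x) : ℝ) : ℂ))
        (mellin (fun t : ℝ => Real.log t • ((Real.exp (-t) : ℝ) : ℂ)) 1) 1 := by
  refine mellin_hasDerivAt_of_isBigO_rpow (a := 2) (b := 0) ?_ ?_ (by norm_num) ?_ (by norm_num)
  · refine (Continuous.continuousOn ?_).locallyIntegrableOn measurableSet_Ioi
    exact Complex.continuous_ofReal.comp (Real.continuous_exp.comp continuous_neg)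
  · rw [← Asymptotics.isBigO_norm_left]
    simp_rw [Complex.norm_real, Asymptotics.isBigO_norm_left]
    simpa only [neg_one_mul] using
      (isLittleO_exp_neg_mul_rpow_atTop zero_lt_one _).isBigO
  · simp_rw [neg_zero, Real.rpow_zero]
    refine Asymptotics.isBigO_const_of_tendsto (?_ : Tendsto _ _ (𝓝 (1 : ℂ))) one_ne_zero
    rw [(by simp : (1 : ℂ) = Real.exp (-0))]
    exact (Complex.continuous_ofReal.comp
      (Real.continuous_exp.comp continuous_neg)).continuousWithinAt

lemma mellin_eq : mellin (fun t : ℝ => Real.log t • ((Real.exp (-t) : ℝ) : ℂ)) 1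
    = ((∫ t in Ioi (0:ℝ), Real.exp (-t) * Real.log t : ℝ) : ℂ) := by
  rw [mellin]
  rw [show (∫ t : ℝ in Ioi 0, (t:ℂ) ^ ((1:ℂ) - 1) • Real.log t • ((Real.exp (-t) : ℝ) : ℂ))
      = ∫ t : ℝ in Ioi 0, ((Real.exp (-t) * Real.log t : ℝ) : ℂ) from
    setIntegral_congr_fun measurableSet_Ioi fun t ht => by
      simp only [sub_self, Complex.cpow_zero, one_smul, Complex.real_smul]
      push_cast; ring]
  exact integral_ofReal

lemma integrableOn_expLog : IntegrableOn (fun t : ℝ => Real.exp (-t) * Real.log t) (Ioi 0) := by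
  have h := mellinPair.1
  rw [MellinConvergent] at h
  have h2 : IntegrableOn (fun t : ℝ => ((Real.exp (-t) * Real.log t : ℝ) : ℂ)) (Ioi 0) := by
    refine h.congr_fun (fun t ht => ?_) measurableSet_Ioi
    simp only [sub_self, Complex.cpow_zero, one_smul, Complex.real_smul]
    push_cast; ring
  have h3 := h2.re
  simp only [RCLike.re_to_complex, Complex.ofReal_re] at h3
  exact h3

lemma integral_expLog : (∫ t in Ioi (0:ℝ), Real.exp (-t) * Real.log t)
    = -Real.eulerMascheroniConstant := by
  have hd : HasDerivAt Complex.Gamma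
      ((∫ t in Ioi (0:ℝ), Real.exp (-t) * Real.log t : ℝ) : ℂ) 1 := by
    have h := mellinPair.2
    rw [mellin_eq] at h
    rw [← Complex.GammaIntegral_eq_mellin] at h
    refine h.congr_of_eventuallyEq ?_
    filter_upwards [(isOpen_lt continuous_const Complex.continuous_re).mem_nhds
      (by norm_num : (1:ℂ).re > 0)] with s hs
    exact Complex.Gamma_eq_integral hs
  have h2 := Complex.hasDerivAt_Gamma_one
  have := hd.unique h2
  exact_mod_cast this

lemma integrableOn_expDiv {x : ℝ} (hx : 0 < x) :
    IntegrableOn (fun t : ℝ => Real.exp (-t) / t) (Ioi x) := by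
  refine integrable_of_isBigO_exp_neg (a := x) zero_lt_one ?_ ?_
  · refine ContinuousOn.div (Real.continuous_exp.comp continuous_neg).continuousOn
      continuousOn_id fun t ht => ?_
    exact (lt_of_lt_of_le hx ht).ne'
  · rw [Asymptotics.isBigO_iff]
    refine ⟨1, ?_⟩
    filter_upwards [eventually_ge_atTop 1] with t ht
    rw [Real.norm_eq_abs, Real.norm_eq_abs, abs_of_nonneg (by positivity),
      abs_of_nonneg (Real.exp_pos _).le, neg_one_mul, one_mul]
    rw [div_le_iff₀ (by linarith)]
    nlinarith [Real.exp_pos (-t)]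

lemma tendsto_expLog_atTop :
    Tendsto (fun t : ℝ => Real.exp (-t) * Real.log t) atTop (𝓝 0) := by
  have h := tendsto_pow_mul_exp_neg_atTop_nhds_zero 1
  refine squeeze_zero_norm' ?_ (by simpa using h)
  filter_upwards [eventually_ge_atTop 1] with t ht
  rw [Real.norm_eq_abs, abs_mul, abs_of_nonneg (Real.exp_pos _).le, abs_of_nonneg
    (Real.log_nonneg ht)]
  have hlog : Real.log t ≤ t := (Real.log_le_sub_one_of_pos (by linarith)).trans (by linarith)
  calc Real.exp (-t) * Real.log t ≤ Real.exp (-t) * t := by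
        exact mul_le_mul_of_nonneg_left hlog (Real.exp_pos _).le
    _ = t * Real.exp (-t) := mul_comm _ _

lemma parts {x : ℝ} (hx : 0 < x) :
    (∫ t in Ioi x, Real.exp (-t) / t)
      = (∫ t in Ioi x, Real.exp (-t) * Real.log t) - Real.exp (-x) * Real.log x := by
  have hLog : IntegrableOn (fun t : ℝ => Real.exp (-t) * Real.log t) (Ioi x) :=
    integrableOn_expLog.mono_set (Ioi_subset_Ioi hx.le)
  have hDiv := integrableOn_expDiv hx
  have key : (∫ t in Ioi x, (Real.exp (-t) / t - Real.exp (-t) * Real.log t))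
      = 0 - Real.exp (-x) * Real.log x := by
    refine integral_Ioi_of_hasDerivAt_of_tendsto ?_ (fun t ht => ?_) (hDiv.sub hLog)
      tendsto_expLog_atTop
    · refine ContinuousAt.continuousWithinAt ?_
      exact ((Real.continuous_exp.comp continuous_neg).continuousAt).mul
        (Real.continuousAt_log hx.ne')
    · have ht0 : (0:ℝ) < t := hx.trans ht
      have h1 : HasDerivAt (fun t : ℝ => Real.exp (-t)) (-Real.exp (-t)) t := by
        simpa [Function.comp_def] using (Real.hasDerivAt_exp (-t)).comp t (hasDerivAt_neg t)
      have h2 := h1.mul (Real.hasDerivAt_log ht0.ne')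
      convert h2 using 1
      · rfl
      · rfl
      · simp only [Pi.sub_apply]
        ring
  have := integral_sub hDiv hLog
  rw [this] at key
  linarith



lemma tendsto_tail :
    Tendsto (fun x : ℝ => ∫ t in Ioi x, Real.exp (-t) * Real.log t) (𝓝[>] (0:ℝ))
      (𝓝 (∫ t in Ioi (0:ℝ), Real.exp (-t) * Real.log t)) := by
  set g : ℝ → ℝ := fun t => Real.exp (-t) * Real.log t with hg
  have hsplit : ∀ x : ℝ, 0 < x →
      (∫ t in Ioi x, g t) = (∫ t in Ioi (0:ℝ), g t) - ∫ t in Ioc 0 x, g t := by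
    intro x hx
    have hu : Ioc 0 x ∪ Ioi x = Ioi (0:ℝ) := Ioc_union_Ioi_eq_Ioi hx.le
    have hd : Disjoint (Ioc (0:ℝ) x) (Ioi x) := Ioc_disjoint_Ioi le_rfl
    have := setIntegral_union hd measurableSet_Ioi
      (integrableOn_expLog.mono_set Ioc_subset_Ioi_self)
      (integrableOn_expLog.mono_set (Ioi_subset_Ioi hx.le))
    rw [hu] at this
    linarith
  have hIcc : IntegrableOn g (Icc 0 1) := by
    rw [integrableOn_Icc_iff_integrableOn_Ioc]
    exact integrableOn_expLog.mono_set Ioc_subset_Ioi_self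
  have hcont : ContinuousWithinAt (fun x => ∫ t in Ioc (0:ℝ) x, g t) (Icc 0 1) 0 :=
    (intervalIntegral.continuousOn_primitive hIcc) 0 (by norm_num)
  have h0 : (∫ t in Ioc (0:ℝ) (0:ℝ), g t) = 0 := by simp
  have htend : Tendsto (fun x => ∫ t in Ioc (0:ℝ) x, g t) (𝓝[>] (0:ℝ)) (𝓝 0) := by
    have := hcont.tendsto
    rw [h0] at this
    refine this.mono_left ?_
    rw [← nhdsWithin_Ioc_eq_nhdsGT (zero_lt_one (α := ℝ))]
    exact nhdsWithin_mono _ Ioc_subset_Icc_self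
  have := (tendsto_const_nhds (x := ∫ t in Ioi (0:ℝ), g t)
    (f := 𝓝[>] (0:ℝ))).sub htend
  rw [sub_zero] at this
  refine this.congr' ?_
  filter_upwards [self_mem_nhdsWithin] with x hx
  exact (hsplit x hx).symm

lemma tendsto_small :
    Tendsto (fun x : ℝ => (1 - Real.exp (-x)) * Real.log x) (𝓝[>] (0:ℝ)) (𝓝 0) := by
  have h : Tendsto (fun x : ℝ => Real.log x * x) (𝓝[>] (0:ℝ)) (𝓝 0) := by
    simpa using tendsto_log_mul_rpow_nhdsGT_zero (one_pos (α := ℝ))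
  refine squeeze_zero_norm' ?_ (by simpa using h.norm)
  filter_upwards [Ioc_mem_nhdsGT_of_mem (left_mem_Ico.2 (zero_lt_one (α := ℝ)))] with x hx
  have hx0 : 0 < x := hx.1
  have h1 : 1 - Real.exp (-x) ≤ x := by nlinarith [Real.add_one_le_exp (-x)]
  have h2 : 0 ≤ 1 - Real.exp (-x) := by
    have : Real.exp (-x) ≤ Real.exp 0 := Real.exp_le_exp.2 (by linarith)
    simpa using this
  rw [Real.norm_eq_abs, abs_mul, mul_comm (|1 - Real.exp (-x)|)]
  refine mul_le_mul_of_nonneg_left ?_ (abs_nonneg _)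
  rw [abs_of_nonneg h2]
  exact h1.trans (le_abs_self x)


theorem stmt9 :
    Filter.Tendsto
      (fun x : ℝ => (∫ t in Set.Ioi x, Real.exp (-t) / t) + Real.log x)
      (nhdsWithin 0 (Set.Ioi 0)) (nhds (-Real.eulerMascheroniConstant)) := by
  have h := tendsto_tail.add tendsto_small
  rw [integral_expLog, add_zero] at h
  refine h.congr' ?_
  filter_upwards [self_mem_nhdsWithin] with x hx
  rw [parts hx]
  ring
end

section
/- For positive integers a, p, q, the limit as λ → p/q of cot(aλqπ)·aλqπ + cot(a(1/λ)pπ)·a(1/λ)pπ equals 1. -/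
open Real Filter Topology

lemma aux_cot_periodic : Function.Periodic Real.cot π := by
  intro x
  simp [Real.cot_eq_cos_div_sin, Real.sin_add, Real.cos_add, div_neg, neg_div]

lemma aux_cot_neg (x : ℝ) : Real.cot (-x) = - Real.cot x := by
  simp [Real.cot_eq_cos_div_sin, neg_div, div_neg]

lemma aux_l1 : Tendsto (fun x : ℝ => x * Real.cot x) (𝓝[≠] (0:ℝ)) (𝓝 1) := by
  have hs : Tendsto (fun x : ℝ => Real.sin x / x) (𝓝[≠] (0:ℝ)) (𝓝 1) := by
    have := hasDerivAt_iff_tendsto_slope.mp (Real.hasDerivAt_sin 0)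
    rw [Real.cos_zero] at this
    exact this.congr fun x => by simp [slope_def_field]
  have h2 : Tendsto (fun x : ℝ => Real.cos x * (Real.sin x / x)⁻¹) (𝓝[≠] (0:ℝ)) (𝓝 1) := by
    have hc : Tendsto (fun x : ℝ => Real.cos x) (𝓝[≠] (0:ℝ)) (𝓝 1) := by
      simpa using (Real.continuous_cos.tendsto 0).mono_left nhdsWithin_le_nhds
    simpa using hc.mul (hs.inv₀ one_ne_zero)
  refine h2.congr fun x => ?_
  rw [Real.cot_eq_cos_div_sin, inv_div]
  ring

lemma aux_bound_pos (x : ℝ) (h0 : 0 < x) (h1 : x ≤ 1) : |Real.cot x - 1/x| ≤ x := by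
  have hxpi : x < π := lt_of_le_of_lt h1 (by linarith [Real.pi_gt_three])
  have hsin : 0 < Real.sin x := Real.sin_pos_of_pos_of_lt_pi h0 hxpi
  have hslb : x - x^3/4 < Real.sin x := by
    have := Real.sin_gt_sub_cube h0; nlinarith [pow_pos h0 3]
  have hsub : Real.sin x < x := Real.sin_lt h0
  have hclb : 1 - x^2/2 < Real.cos x := Real.one_sub_sq_div_two_lt_cos (ne_of_gt h0)
  have hcub : Real.cos x ≤ 1 := Real.cos_le_one x
  have heq : Real.cot x - 1/x = (x * Real.cos x - Real.sin x)/(x * Real.sin x) := by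
    rw [Real.cot_eq_cos_div_sin]
    field_simp
  rw [heq, abs_div, abs_of_pos (mul_pos h0 hsin), div_le_iff₀ (mul_pos h0 hsin)]
  rw [abs_le]
  have hx2 : x^2 ≤ 1 := by nlinarith
  have hC : x^3/2 ≤ x*(x*Real.sin x) := by nlinarith [mul_lt_mul_of_pos_left hslb (mul_pos h0 h0)]
  constructor
  · nlinarith [mul_lt_mul_of_pos_left hclb h0]
  · nlinarith

lemma aux_bound (x : ℝ) (h0 : x ≠ 0) (h1 : |x| ≤ 1) : |Real.cot x - 1/x| ≤ |x| := by
  have key : ∀ y : ℝ, 0 < y → y ≤ 1 → |Real.cot y - 1/y| ≤ |y| := fun y hy hy1 => by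
    simpa [abs_of_pos hy] using aux_bound_pos y hy hy1
  rcases lt_or_gt_of_ne h0 with hneg | hpos
  · have := key (-x) (by linarith) (by rwa [abs_of_neg hneg] at h1)
    rw [aux_cot_neg] at this
    calc |Real.cot x - 1/x| = |(-(Real.cot x)) - 1/(-x)| := by rw [← abs_neg]; ring_nf
      _ ≤ |(-x)| := this
      _ = |x| := abs_neg x
  · exact key x hpos (by rwa [abs_of_pos hpos] at h1)

lemma aux_l2 : Tendsto (fun x : ℝ => Real.cot x - 1/x) (𝓝[≠] (0:ℝ)) (𝓝 0) := by
  have hb : ∀ᶠ x : ℝ in 𝓝[≠] (0:ℝ), ‖Real.cot x - 1/x‖ ≤ |x| := by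
    have h1 : ∀ᶠ x : ℝ in 𝓝[≠] (0:ℝ), |x| ≤ 1 :=
      eventually_nhdsWithin_of_eventually_nhds (by
        have : ∀ᶠ x : ℝ in 𝓝 0, x ∈ Set.Ioo (-1:ℝ) 1 :=
          Ioo_mem_nhds (by norm_num) (by norm_num)
        filter_upwards [this] with x hx
        rw [abs_le]; exact ⟨hx.1.le, hx.2.le⟩)
    filter_upwards [h1, self_mem_nhdsWithin] with x hx hx0
    exact aux_bound x hx0 hx
  refine squeeze_zero_norm' hb ?_
  have h2 : Tendsto (fun x : ℝ => |x|) (𝓝 (0:ℝ)) (𝓝 |(0:ℝ)|) := continuous_abs.tendsto 0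
  simpa using h2.mono_left nhdsWithin_le_nhds

theorem stmt16 (a p q : ℕ) (ha : 1 ≤ a) (hp : 1 ≤ p) (hq : 1 ≤ q) :
    Filter.Tendsto
      (fun l : ℝ =>
        Real.cot (a * l * q * Real.pi) * (a * l * q * Real.pi) +
          Real.cot (a * (1 / l) * p * Real.pi) * (a * (1 / l) * p * Real.pi))
      (nhdsWithin ((p : ℝ) / q) {(p : ℝ) / q}ᶜ) (nhds 1) := by
  have ha0 : (a:ℝ) ≠ 0 := Nat.cast_ne_zero.mpr (by omega)
  have hp0 : (p:ℝ) ≠ 0 := Nat.cast_ne_zero.mpr (by omega)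
  have hq0 : (q:ℝ) ≠ 0 := Nat.cast_ne_zero.mpr (by omega)
  have hπ : (π:ℝ) ≠ 0 := Real.pi_ne_zero
  set c : ℝ := (p:ℝ)/q with hc_def
  have hc : 0 < c := by
    apply div_pos <;> [exact Nat.cast_pos.mpr (by omega); exact Nat.cast_pos.mpr (by omega)]
  set k : ℝ := (a:ℝ)*q*π with hk_def
  have hk : k ≠ 0 := by
    rw [hk_def]; exact mul_ne_zero (mul_ne_zero ha0 hq0) hπ
  -- auxiliary maps into punctured neighborhood of 0
  have hu : Tendsto (fun l : ℝ => k*(l-c)) (𝓝[≠] c) (𝓝[≠] (0:ℝ)) := by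
    rw [tendsto_nhdsWithin_iff]
    constructor
    · have : Tendsto (fun l : ℝ => k*(l-c)) (𝓝 c) (𝓝 (k*(c-c))) :=
        (continuous_const.mul (continuous_id.sub continuous_const)).tendsto c
      simpa using this.mono_left nhdsWithin_le_nhds
    · filter_upwards [self_mem_nhdsWithin] with l hl
      exact mul_ne_zero hk (sub_ne_zero.mpr hl)
  have hl0ev : ∀ᶠ l : ℝ in 𝓝[≠] c, 0 < l :=
    eventually_nhdsWithin_of_eventually_nhds (eventually_gt_nhds hc)
  have hv : Tendsto (fun l : ℝ => k*(l-c)/l) (𝓝[≠] c) (𝓝[≠] (0:ℝ)) := by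
    rw [tendsto_nhdsWithin_iff]
    constructor
    · have h1 : Tendsto (fun l : ℝ => k*(l-c)) (𝓝 c) (𝓝 (k*(c-c))) :=
        (continuous_const.mul (continuous_id.sub continuous_const)).tendsto c
      have := h1.div tendsto_id (ne_of_gt hc)
      have h3 := this.mono_left (nhdsWithin_le_nhds (s := {c}ᶜ))
      simp only [sub_self, mul_zero, zero_div] at h3
      exact h3
    · filter_upwards [self_mem_nhdsWithin, hl0ev] with l hl hlpos
      exact div_ne_zero (mul_ne_zero hk (sub_ne_zero.mpr hl)) (ne_of_gt hlpos)
  -- the rewritten function tends to 1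
  have T1 := aux_l1.comp hu
  have T2 := aux_l1.comp hv
  have T3 := aux_l2.comp hu
  have T4 := aux_l2.comp hv
  have TG : Tendsto (fun l : ℝ =>
      (k*(l-c)) * Real.cot (k*(l-c)) + (k*(l-c)/l) * Real.cot (k*(l-c)/l) +
        ((a:ℝ)*p*π * (Real.cot (k*(l-c)) - 1/(k*(l-c)))
          - (a:ℝ)*q*π * (Real.cot (k*(l-c)/l) - 1/(k*(l-c)/l))) - 1)
      (𝓝[≠] c) (𝓝 1) := by
    have := ((T1.add T2).add ((T3.const_mul ((a:ℝ)*p*π)).sub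
      (T4.const_mul ((a:ℝ)*q*π)))).sub_const 1
    have h11 : (1:ℝ) + 1 + ((a:ℝ)*p*π * 0 - (a:ℝ)*q*π * 0) - 1 = 1 := by ring
    rw [h11] at this
    refine this.congr fun l => ?_
    simp [Function.comp]
  -- eventual equality with the original function
  refine TG.congr' ?_
  filter_upwards [self_mem_nhdsWithin, hl0ev] with l hlc hlpos
  have hl0 : l ≠ 0 := ne_of_gt hlpos
  have hlc' : l - c ≠ 0 := sub_ne_zero.mpr hlc
  have h1 : Real.cot ((a:ℝ) * l * q * π) = Real.cot (k*(l-c)) := by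
    have e : (a:ℝ) * l * q * π = k*(l-c) + ((a*p : ℕ):ℝ)*π := by
      rw [hk_def, hc_def]; push_cast; field_simp; ring
    rw [e, (aux_cot_periodic.nat_mul (a*p)) (k*(l-c))]
  have h2 : Real.cot ((a:ℝ) * (1/l) * p * π) = - Real.cot (k*(l-c)/l) := by
    have e : (a:ℝ) * (1/l) * p * π = -(k*(l-c)/l) + ((a*q : ℕ):ℝ)*π := by
      rw [hk_def, hc_def]; push_cast; field_simp; ring
    rw [e, (aux_cot_periodic.nat_mul (a*q)) (-(k*(l-c)/l)), aux_cot_neg]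
  show _ = Real.cot ((a:ℝ) * l * q * π) * ((a:ℝ) * l * q * π) +
      Real.cot ((a:ℝ) * (1/l) * p * π) * ((a:ℝ) * (1/l) * p * π)
  rw [h1, h2]
  set C := Real.cot (k*(l-c)) with hC
  set D := Real.cot (k*(l-c)/l) with hD
  have hlc2 : l - (p:ℝ)/q ≠ 0 := hlc'
  rw [hk_def, hc_def]
  have hd : -((a:ℝ)*(q:ℝ)*π*(p:ℝ)) + (a:ℝ)*(q:ℝ)^2*π*l ≠ 0 := by
    have he : -((a:ℝ)*(q:ℝ)*π*(p:ℝ)) + (a:ℝ)*(q:ℝ)^2*π*l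
        = ((a:ℝ)*(q:ℝ)*π)*((q:ℝ)*(l - (p:ℝ)/q)) := by
      field_simp
      ring
    rw [he]
    exact mul_ne_zero (mul_ne_zero (mul_ne_zero ha0 hq0) hπ) (mul_ne_zero hq0 hlc2)
  field_simp [hd]
  have hqlp : (q:ℝ)*l - p ≠ 0 := by
    intro h; apply hlc2; field_simp; linarith
  field_simp
  ring
end
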